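/- For every z ∈ Ξ, φ, ψ ∈ Φ and g, h ∈ Δ_z, one has the multiplication rule G_z(φ,g) · G_z(ψ,h) = G_z(φ + ψ + (1/2)(h*g − g*h), g + h), where h*g and g*h denote the scalar polynomials h(ω)*g(ω) and g(ω)*h(ω). -/

import Mathlib

open Polynomial Matrix

noncomputable section

/-- The matrix `D = diag(-1,1,...,1)` of size `ν × ν` with `ν = n + 2`. -/
def Dm (n : ℕ) : Matrix (Fin (n + 2)) (Fin (n + 2)) ℂ :=
  Matrix.diagonal fun i => if i = 0 then -1 else 1

/-- Coefficientwise complex conjugation of a scalar polynomial (`ω` treated as real). -/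
def cstar (p : ℂ[X]) : ℂ[X] := p.map (starRingEnd ℂ)

/-- Polynomial matrices of size `(n+2) × (n+2)`. -/
abbrev PM (n : ℕ) := Matrix (Fin (n + 2)) (Fin (n + 2)) ℂ[X]

/-- `U(ω)* = Σ Uι* ωⁱ` : coefficientwise conjugate transpose of a polynomial matrix. -/
def Mstar (n : ℕ) (U : PM n) : PM n := Matrix.of fun i j => cstar (U j i)

/-- The scalar polynomial `g(ω)* h(ω)` for vector polynomials `g, h`. -/
def pdot (n : ℕ) (g h : Fin (n + 2) → ℂ[X]) : ℂ[X] := ∑ i, cstar (g i) * h i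

/-- `Ξ = {z : z₁ = 1, z* D z = 0}`. -/
def Xi (n : ℕ) : Set (Fin (n + 2) → ℂ) :=
  {z | z 0 = 1 ∧ star z ⬝ᵥ (Dm n).mulVec z = 0}

/-- `Δ_z⁰ = {d : d* z = d* D z = 0}`. -/
def Delta0 (n : ℕ) (z : Fin (n + 2) → ℂ) : Set (Fin (n + 2) → ℂ) :=
  {d | star d ⬝ᵥ z = 0 ∧ star d ⬝ᵥ (Dm n).mulVec z = 0}

/-- `Φ = {φ : φ(0) = 0, φ* = -φ}`. -/
def Phi : Set ℂ[X] := {φ | φ.eval 0 = 0 ∧ cstar φ = -φ}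

/-- `Δ_z` : vector polynomials vanishing at 0 with all coefficient vectors in `Δ_z⁰`. -/
def DeltaZ (n : ℕ) (z : Fin (n + 2) → ℂ) : Set (Fin (n + 2) → ℂ[X]) :=
  {g | (∀ i, (g i).eval 0 = 0) ∧ ∀ k : ℕ, (fun i => (g i).coeff k) ∈ Delta0 n z}

/-- `G_z(φ,g) = D·[z(φ - (1/2)g*g)z* + (zg* - gz*)] + I`. -/
def Gmat (n : ℕ) (z : Fin (n + 2) → ℂ) (φ : ℂ[X]) (g : Fin (n + 2) → ℂ[X]) : PM n :=
  (Dm n).map Polynomial.C *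
      Matrix.of (fun i j =>
        Polynomial.C (z i) * (φ - Polynomial.C (1 / 2 : ℂ) * pdot n g g) *
            Polynomial.C (star (z j)) +
          (Polynomial.C (z i) * cstar (g j) - g i * Polynomial.C (star (z j)))) +
    1

/-- `M` : the group of polynomial matrices with `U(ω) D U(ω)* = D`. -/
def MM (n : ℕ) : Set (PM n) :=
  {U | U * (Dm n).map Polynomial.C * Mstar n U = (Dm n).map Polynomial.C}

/-- `M₀ = {U ∈ M : U(0) = I}`. -/
def M0 (n : ℕ) : Set (PM n) :=
  {U | U ∈ MM n ∧ U.map (fun p => p.eval 0) = 1}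

/-- `M_z = {G_z(φ,g) : φ ∈ Φ, g ∈ Δ_z}`. -/
def Mz (n : ℕ) (z : Fin (n + 2) → ℂ) : Set (PM n) :=
  {U | ∃ φ ∈ Phi, ∃ g ∈ DeltaZ n z, U = Gmat n z φ g}

/-- `Ψ_z = {G_z(φ,0) : φ ∈ Φ}`. -/
def Psi (n : ℕ) (z : Fin (n + 2) → ℂ) : Set (PM n) :=
  {U | ∃ φ ∈ Phi, U = Gmat n z φ 0}

/-- Degree of a polynomial matrix: the largest `ι` with a nonzero coefficient `ω^ι`. -/
def degPM (n : ℕ) (U : PM n) : ℕ :=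
  Finset.univ.sup fun p : Fin (n + 2) × Fin (n + 2) => (U p.1 p.2).natDegree

def eps (n : ℕ) (k : Fin (n + 2)) : ℂ := if k = 0 then -1 else 1

lemma dm_map (n : ℕ) :
    (Dm n).map Polynomial.C = Matrix.diagonal (fun k => Polynomial.C (eps n k)) := by
  rw [Dm, Matrix.diagonal_map (by simp)]; rfl

lemma xi_sum {n : ℕ} {z : Fin (n+2) → ℂ} (hz : z ∈ Xi n) :
    ∑ k, Polynomial.C (eps n k) * Polynomial.C (star (z k)) * Polynomial.C (z k) = 0 := by
  have h2 := hz.2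
  simp only [dotProduct, Dm, Matrix.mulVec_diagonal, Pi.star_apply] at h2
  simp only [← _root_.map_mul, ← map_sum]
  rw [show (0 : ℂ[X]) = Polynomial.C 0 by simp]
  congr 1
  rw [← h2]
  exact Finset.sum_congr rfl fun k _ => by simp only [eps]; ring

lemma pS2 {n : ℕ} {z : Fin (n+2) → ℂ} {g : Fin (n+2) → ℂ[X]} (hg : g ∈ DeltaZ n z) :
    ∑ k, Polynomial.C (eps n k) * cstar (g k) * Polynomial.C (z k) = 0 := by
  ext m
  have h2 := (hg.2 m).2
  simp only [dotProduct, Dm, Matrix.mulVec_diagonal, Pi.star_apply] at h2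
  simp only [Polynomial.finset_sum_coeff, Polynomial.coeff_mul_C, Polynomial.coeff_C_mul,
    cstar, Polynomial.coeff_map, Polynomial.coeff_zero]
  rw [← h2]
  exact Finset.sum_congr rfl fun k _ => by
    simp only [eps, starRingEnd_apply]; ring

lemma pS3 {n : ℕ} {z : Fin (n+2) → ℂ} {h : Fin (n+2) → ℂ[X]} (hh : h ∈ DeltaZ n z) :
    ∑ k, Polynomial.C (eps n k) * Polynomial.C (star (z k)) * h k = 0 := by
  ext m
  have h2 := (hh.2 m).2
  simp only [dotProduct, Dm, Matrix.mulVec_diagonal, Pi.star_apply] at h2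
  have h3 := congrArg (starRingEnd ℂ) h2
  simp only [map_sum, _root_.map_mul, map_zero, starRingEnd_apply, star_star] at h3
  simp only [Polynomial.finset_sum_coeff, Polynomial.coeff_C_mul, Polynomial.coeff_zero]
  rw [← h3]
  refine Finset.sum_congr rfl fun k _ => ?_
  have : star (if k = 0 then (-1:ℂ) else 1) = (if k = 0 then (-1:ℂ) else 1) := by
    split <;> simp
  simp only [mul_assoc, Polynomial.coeff_C_mul, eps, this]
  ring

lemma g_zero {n : ℕ} {z : Fin (n+2) → ℂ} {g : Fin (n+2) → ℂ[X]}
    (hz : z ∈ Xi n) (hg : g ∈ DeltaZ n z) : g 0 = 0 := by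
  ext m
  have h1 := (hg.2 m).1
  have h2 := (hg.2 m).2
  simp only [dotProduct, Dm, Matrix.mulVec_diagonal, Pi.star_apply] at h1 h2
  have hsub : (∑ k, star ((g k).coeff m) * z k)
      - (∑ k, star ((g k).coeff m) * ((if k = 0 then (-1:ℂ) else 1) * z k))
      = star ((g 0).coeff m) * z 0 * 2 := by
    rw [← Finset.sum_sub_distrib]
    rw [Finset.sum_eq_single 0]
    · simp; ring
    · intro k _ hk; simp [hk]
    · simp
  rw [h1, h2, hz.1] at hsub
  have : star ((g 0).coeff m) = 0 := by
    have := hsub.symm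
    simp at this
    simpa using this
  simpa using congrArg star this

lemma pS5 {n : ℕ} {z : Fin (n+2) → ℂ} {g h : Fin (n+2) → ℂ[X]}
    (hz : z ∈ Xi n) (hg : g ∈ DeltaZ n z) :
    ∑ k, Polynomial.C (eps n k) * cstar (g k) * h k = pdot n g h := by
  unfold pdot
  refine Finset.sum_congr rfl fun k _ => ?_
  by_cases hk : k = 0
  · subst hk; rw [g_zero hz hg]; simp [cstar]
  · simp [eps, hk]

lemma pdot_add_left {n : ℕ} (g h q : Fin (n+2) → ℂ[X]) :
    pdot n (g + h) q = pdot n g q + pdot n h q := by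
  simp [pdot, cstar, Polynomial.map_add, add_mul, Finset.sum_add_distrib]

lemma pdot_add_right {n : ℕ} (g h q : Fin (n+2) → ℂ[X]) :
    pdot n q (g + h) = pdot n q g + pdot n q h := by
  simp [pdot, mul_add, Finset.sum_add_distrib]

/-- the multiplication rule
`G_z(φ,g) · G_z(ψ,h) = G_z(φ + ψ + (1/2)(h*g − g*h), g + h)`. -/
theorem stmt1 (n : ℕ) (z : Fin (n + 2) → ℂ) (hz : z ∈ Xi n)
    (φ ψ : ℂ[X]) (hφ : φ ∈ Phi) (hψ : ψ ∈ Phi)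
    (g h : Fin (n + 2) → ℂ[X]) (hg : g ∈ DeltaZ n z) (hh : h ∈ DeltaZ n z) :
    Gmat n z φ g * Gmat n z ψ h =
      Gmat n z (φ + ψ + Polynomial.C (1 / 2 : ℂ) * (pdot n h g - pdot n g h)) (g + h) := by
  set α := φ - Polynomial.C (1 / 2 : ℂ) * pdot n g g with hα
  set β := ψ - Polynomial.C (1 / 2 : ℂ) * pdot n h h with hβ
  set γ := φ + ψ + Polynomial.C (1 / 2 : ℂ) * (pdot n h g - pdot n g h)
    - Polynomial.C (1 / 2 : ℂ) * pdot n (g + h) (g + h) with hγ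
  set M : PM n := Matrix.of (fun i j =>
    Polynomial.C (z i) * α * Polynomial.C (star (z j)) +
      (Polynomial.C (z i) * cstar (g j) - g i * Polynomial.C (star (z j)))) with hM
  set N : PM n := Matrix.of (fun i j =>
    Polynomial.C (z i) * β * Polynomial.C (star (z j)) +
      (Polynomial.C (z i) * cstar (h j) - h i * Polynomial.C (star (z j)))) with hN
  set P : PM n := Matrix.of (fun i j =>
    Polynomial.C (z i) * γ * Polynomial.C (star (z j)) +
      (Polynomial.C (z i) * cstar ((g + h) j) - (g + h) i * Polynomial.C (star (z j)))) with hP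
  set A : PM n := (Dm n).map Polynomial.C with hA
  have hG1 : Gmat n z φ g = A * M + 1 := rfl
  have hG2 : Gmat n z ψ h = A * N + 1 := rfl
  have hG3 : Gmat n z (φ + ψ + Polynomial.C (1 / 2 : ℂ) * (pdot n h g - pdot n g h)) (g + h)
      = A * P + 1 := rfl
  have htwo : (Polynomial.C (1/2 : ℂ)) * 2 = (1 : ℂ[X]) := by
    rw [show (2:ℂ[X]) = Polynomial.C 2 from (map_ofNat Polynomial.C 2).symm,
      ← Polynomial.C_mul]
    norm_num
  have key : M * A * N + M + N = P := by
    refine Matrix.ext fun i j => ?_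
    have hMA : (M * A * N) i j
        = ∑ k, M i k * Polynomial.C (eps n k) * N k j := by
      rw [hA, dm_map, Matrix.mul_apply]
      refine Finset.sum_congr rfl fun k _ => ?_
      rw [Matrix.mul_diagonal]
    have hbig : (M * A * N) i j = - (Polynomial.C (z i) * pdot n g h * Polynomial.C (star (z j))) := by
      rw [hMA]
      have h9 : ∑ k, M i k * Polynomial.C (eps n k) * N k j =
          (Polynomial.C (z i) * α) * (∑ k, Polynomial.C (eps n k) * Polynomial.C (star (z k)) * Polynomial.C (z k)) * (β * Polynomial.C (star (z j)))
        + (Polynomial.C (z i) * α) * (∑ k, Polynomial.C (eps n k) * Polynomial.C (star (z k)) * Polynomial.C (z k)) * cstar (h j)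
        - (Polynomial.C (z i) * α) * (∑ k, Polynomial.C (eps n k) * Polynomial.C (star (z k)) * h k) * Polynomial.C (star (z j))
        + Polynomial.C (z i) * (∑ k, Polynomial.C (eps n k) * cstar (g k) * Polynomial.C (z k)) * (β * Polynomial.C (star (z j)))
        + Polynomial.C (z i) * (∑ k, Polynomial.C (eps n k) * cstar (g k) * Polynomial.C (z k)) * cstar (h j)
        - Polynomial.C (z i) * (∑ k, Polynomial.C (eps n k) * cstar (g k) * h k) * Polynomial.C (star (z j))
        - g i * (∑ k, Polynomial.C (eps n k) * Polynomial.C (star (z k)) * Polynomial.C (z k)) * (β * Polynomial.C (star (z j)))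
        - g i * (∑ k, Polynomial.C (eps n k) * Polynomial.C (star (z k)) * Polynomial.C (z k)) * cstar (h j)
        + g i * (∑ k, Polynomial.C (eps n k) * Polynomial.C (star (z k)) * h k) * Polynomial.C (star (z j)) := by
        simp only [Finset.mul_sum, Finset.sum_mul, ← Finset.sum_add_distrib,
          ← Finset.sum_sub_distrib]
        refine Finset.sum_congr rfl fun k _ => ?_
        simp only [hM, hN, Matrix.of_apply]
        ring
      rw [h9, xi_sum hz, pS2 hg, pS3 hh, pS5 hz hg]
      ring
    simp only [Matrix.add_apply, hbig]
    simp only [hM, hN, hP, Matrix.of_apply, Pi.add_apply]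
    rw [hγ, pdot_add_left, pdot_add_right, pdot_add_right]
    simp only [cstar, Polynomial.map_add]
    rw [hα, hβ]
    linear_combination (Polynomial.C (z i) * pdot n g h * Polynomial.C (star (z j))) * htwo
  rw [hG1, hG2, hG3, ← key]
  noncomm_ring
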